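/- Let m ≥ 1, let F : ℝ^m → ℝ be C³ and homogeneous of degree 6, and set f = ∇F. Let Q : [0, ∞) → ℝ^m be continuous on [0, ∞), C² on (0, ∞), not constant, satisfying Q''(r) + (2/r) Q'(r) + f(Q(r)) = 0 on (0, ∞), lim_{r→0+} Q'(r) = 0, lim_{r→∞} Q(r) = 0 and lim_{r→∞} Q'(r) = 0. Then the integral ∫_0^∞ (2/r) |Q'(r)|² dr converges, and F(Q(0)) = ∫_0^∞ (2/r) |Q'(r)|² dr > 0. -/

import Mathlib

open Set Filter MeasureTheory

open scoped RealInnerProductSpace Topology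

/-- First assertion of Proposition 3.11: the potential `F` is strictly positive at the
central value `Q(0)` of a nontrivial decaying radial stationary solution. -/
theorem stmt7 (m : ℕ) (hm : 1 ≤ m)
    (F : EuclideanSpace ℝ (Fin m) → ℝ) (hF : ContDiff ℝ 3 F)
    (hhom : ∀ c : ℝ, 0 ≤ c → ∀ x, F (c • x) = c ^ 6 * F x)
    (Q Q' Q'' : ℝ → EuclideanSpace ℝ (Fin m))
    (hQc : ContinuousOn Q (Ici 0))
    (hQd : ∀ r : ℝ, 0 < r → HasDerivAt Q (Q' r) r)
    (hQd' : ∀ r : ℝ, 0 < r → HasDerivAt Q' (Q'' r) r)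
    (hQ'' : ContinuousOn Q'' (Ioi 0))
    (hnc : ¬ ∃ c, ∀ r : ℝ, 0 ≤ r → Q r = c)
    (hode : ∀ r : ℝ, 0 < r → Q'' r + (2 / r) • Q' r + gradient F (Q r) = 0)
    (hQ'0 : Tendsto Q' (nhdsWithin 0 (Ioi 0)) (nhds 0))
    (hQinf : Tendsto Q atTop (nhds 0))
    (hQ'inf : Tendsto Q' atTop (nhds 0)) :
    IntegrableOn (fun r : ℝ => (2 / r) * ‖Q' r‖ ^ 2) (Ioi 0) ∧
    F (Q 0) = (∫ r in Ioi (0:ℝ), (2 / r) * ‖Q' r‖ ^ 2) ∧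
    0 < F (Q 0) := by
  set g : ℝ → ℝ := fun r : ℝ => (2 / r) * ‖Q' r‖ ^ 2 with hg_def
  set E : ℝ → ℝ := fun r : ℝ => (1/2) * ⟪Q' r, Q' r⟫ + F (Q r) with hE_def
  have hF0 : F 0 = 0 := by
    have := hhom 0 le_rfl 0
    simpa using this
  have hFdiff : Differentiable ℝ F := hF.differentiable (by norm_num)
  -- continuity of Q' on Ioi 0
  have hQ'cont : ContinuousOn Q' (Ioi 0) := fun r hr =>
    (hQd' r hr).continuousAt.continuousWithinAt
  -- continuity of g on Ioi 0
  have hgcont : ContinuousOn g (Ioi 0) := by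
    apply ContinuousOn.mul
    · exact continuousOn_const.div continuousOn_id fun x hx => ne_of_gt hx
    · exact (hQ'cont.norm).pow 2
  have hgnonneg : ∀ r ∈ Ioi (0:ℝ), 0 ≤ g r := by
    intro r hr
    have : (0:ℝ) < r := hr
    positivity
  -- the energy derivative
  have hE : ∀ r : ℝ, 0 < r → HasDerivAt E (-g r) r := by
    intro r hr
    have h1 : HasDerivAt (fun t => ⟪Q' t, Q' t⟫)
        (⟪Q' r, Q'' r⟫ + ⟪Q'' r, Q' r⟫) r := (hQd' r hr).inner ℝ (hQd' r hr)
    have hgrad : HasFDerivAt F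
        (InnerProductSpace.toDual ℝ _ (gradient F (Q r))) (Q r) :=
      (hFdiff (Q r)).hasGradientAt.hasFDerivAt
    have h2 : HasDerivAt (fun t => F (Q t)) (⟪gradient F (Q r), Q' r⟫) r := by
      have := hgrad.comp_hasDerivAt r (hQd r hr)
      simp only [InnerProductSpace.toDual_apply_apply] at this
      exact this
    have h3 : HasDerivAt E
        ((1/2) * (⟪Q' r, Q'' r⟫ + ⟪Q'' r, Q' r⟫) + ⟪gradient F (Q r), Q' r⟫) r :=
      (h1.const_mul (1/2 : ℝ)).add h2
    have hsum : Q'' r + gradient F (Q r) = -((2/r) • Q' r) := by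
      have h := hode r hr
      have h' : Q'' r + gradient F (Q r) + (2/r) • Q' r = 0 := by
        rw [← h]; abel
      exact eq_neg_of_add_eq_zero_left h'
    have hval : (1/2) * (⟪Q' r, Q'' r⟫ + ⟪Q'' r, Q' r⟫) + ⟪gradient F (Q r), Q' r⟫
        = -g r := by
      have : ⟪Q' r, Q'' r⟫ = ⟪Q'' r, Q' r⟫ := real_inner_comm _ _
      rw [this]
      have hinner : ⟪Q'' r, Q' r⟫ + ⟪gradient F (Q r), Q' r⟫
          = ⟪Q'' r + gradient F (Q r), Q' r⟫ := (inner_add_left _ _ _).symm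
      have : (1/2) * (⟪Q'' r, Q' r⟫ + ⟪Q'' r, Q' r⟫) + ⟪gradient F (Q r), Q' r⟫
          = ⟪Q'' r, Q' r⟫ + ⟪gradient F (Q r), Q' r⟫ := by ring
      rw [this, hinner, hsum, inner_neg_left, real_inner_smul_left,
        real_inner_self_eq_norm_sq]
    rw [← hval]
    exact h3
  -- limits of the energy
  have hEinf : Tendsto E atTop (𝓝 0) := by
    have h1 : Tendsto (fun t => ⟪Q' t, Q' t⟫) atTop (𝓝 (0:ℝ)) := by
      have h := hQ'inf.inner (𝕜 := ℝ) hQ'inf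
      simpa using h
    have h2 : Tendsto (fun t => F (Q t)) atTop (𝓝 (F 0)) :=
      (hF.continuous.continuousAt.tendsto).comp hQinf
    have := ((h1.const_mul (1/2 : ℝ)).add h2)
    rw [hF0] at this
    simpa [hE_def] using this
  have hQ0 : Tendsto Q (nhdsWithin 0 (Ioi 0)) (𝓝 (Q 0)) :=
    (hQc 0 self_mem_Ici).tendsto.mono_left (nhdsWithin_mono 0 Ioi_subset_Ici_self)
  have hE0 : Tendsto E (nhdsWithin 0 (Ioi 0)) (𝓝 (F (Q 0))) := by
    have h1 : Tendsto (fun t => ⟪Q' t, Q' t⟫) (nhdsWithin 0 (Ioi 0)) (𝓝 (0:ℝ)) := by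
      have h := hQ'0.inner (𝕜 := ℝ) hQ'0
      simpa using h
    have h2 : Tendsto (fun t => F (Q t)) (nhdsWithin 0 (Ioi 0)) (𝓝 (F (Q 0))) :=
      (hF.continuous.continuousAt.tendsto).comp hQ0
    have := ((h1.const_mul (1/2 : ℝ)).add h2)
    simpa [hE_def] using this
  -- integrability and value on Ioi s for each s > 0
  have key : ∀ s : ℝ, 0 < s →
      IntegrableOn g (Ioi s) ∧ (∫ r in Ioi s, g r) = E s := by
    intro s hs
    have hEcont : ContinuousWithinAt E (Ici s) s :=
      (hE s hs).continuousAt.continuousWithinAt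
    have hEderiv : ∀ x ∈ Ioi s, HasDerivAt E (-g x) x := fun x hx =>
      hE x (hs.trans hx)
    have hneg : ∀ x ∈ Ioi s, -g x ≤ 0 := fun x hx =>
      neg_nonpos.mpr (hgnonneg x (hs.trans hx))
    have hint : IntegrableOn (fun x => -g x) (Ioi s) :=
      integrableOn_Ioi_deriv_of_nonpos hEcont hEderiv hneg hEinf
    have hint' : IntegrableOn g (Ioi s) := by
      exact integrable_neg_iff.mp hint
    refine ⟨hint', ?_⟩
    have h := integral_Ioi_of_hasDerivAt_of_tendsto hEcont hEderiv hint hEinf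
    rw [integral_neg] at h
    have h2 : (∫ r in Ioi s, g r) = -(0 - E s) := by linarith
    simpa using h2
  have hEnonneg : ∀ s : ℝ, 0 < s → 0 ≤ E s := by
    intro s hs
    rw [← (key s hs).2]
    exact setIntegral_nonneg measurableSet_Ioi fun x hx => hgnonneg x (hs.trans hx)
  have hEmono : ∀ t s : ℝ, 0 < t → t ≤ s → E s ≤ E t := by
    intro t s ht hts
    have hs : 0 < s := lt_of_lt_of_le ht hts
    rw [← (key s hs).2, ← (key t ht).2]
    apply setIntegral_mono_set (key t ht).1
    · exact (ae_restrict_iff' measurableSet_Ioi).2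
        (ae_of_all _ fun x hx => hgnonneg x (ht.trans hx))
    · exact HasSubset.Subset.eventuallyLE (Ioi_subset_Ioi hts)
  -- E is bounded by F (Q 0)
  have hEbound : ∀ s : ℝ, 0 < s → E s ≤ F (Q 0) := by
    intro s hs
    refine ge_of_tendsto hE0 ?_
    filter_upwards [Ioo_mem_nhdsGT_of_mem (Set.mem_Ico.mpr ⟨le_rfl, hs⟩)] with t ht
    exact hEmono t s ht.1 ht.2.le
  -- integrability on Ioi 0
  have hseq : Tendsto (fun n : ℕ => (1:ℝ)/(n+1)) atTop (𝓝 0) :=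
    tendsto_one_div_add_atTop_nhds_zero_nat
  have hseqpos : ∀ n : ℕ, (0:ℝ) < 1/(n+1) := by
    intro n; positivity
  have hint0 : IntegrableOn g (Ioi 0) := by
    have part1 : IntegrableOn g (Ioi 1) := (key 1 one_pos).1
    have part2 : IntegrableOn g (Ioc 0 1) := by
      apply integrableOn_Ioc_of_intervalIntegral_norm_bounded_left
        (I := F (Q 0)) (a := fun n : ℕ => (1:ℝ)/(n+1)) (b := 1) (l := atTop)
      · intro n
        exact ((key _ (hseqpos n)).1).mono_set Ioc_subset_Ioi_self
      · exact hseq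
      · refine Filter.Eventually.of_forall fun n => ?_
        have h1 : (∫ x in Ioc ((1:ℝ)/(n+1)) 1, ‖g x‖) = ∫ x in Ioc ((1:ℝ)/(n+1)) 1, g x := by
          refine setIntegral_congr_fun measurableSet_Ioc fun x hx => ?_
          exact Real.norm_of_nonneg (hgnonneg x ((hseqpos n).trans hx.1))
        rw [h1]
        have h2 : (∫ x in Ioc ((1:ℝ)/(n+1)) 1, g x) ≤ ∫ x in Ioi ((1:ℝ)/(n+1)), g x := by
          apply setIntegral_mono_set (key _ (hseqpos n)).1
          · exact (ae_restrict_iff' measurableSet_Ioi).2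
              (ae_of_all _ fun x hx => hgnonneg x ((hseqpos n).trans hx))
          · exact HasSubset.Subset.eventuallyLE Ioc_subset_Ioi_self
        rw [(key _ (hseqpos n)).2] at h2
        exact h2.trans (hEbound _ (hseqpos n))
    have := part2.union part1
    rwa [Ioc_union_Ioi_eq_Ioi zero_le_one] at this
  -- value of the integral
  have hval : F (Q 0) = ∫ r in Ioi (0:ℝ), g r := by
    have hmono : Monotone (fun n : ℕ => Ioi ((1:ℝ)/(n+1))) := by
      intro a b hab
      apply Ioi_subset_Ioi
      have hcast : (a:ℝ) ≤ b := Nat.cast_le.mpr hab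
      exact one_div_le_one_div_of_le (by positivity) (by linarith)
    have hunion : (⋃ n : ℕ, Ioi ((1:ℝ)/(n+1))) = Ioi (0:ℝ) := by
      ext x
      simp only [mem_iUnion, mem_Ioi]
      constructor
      · rintro ⟨n, hn⟩; exact (hseqpos n).trans hn
      · intro hx
        obtain ⟨n, hn⟩ := exists_nat_one_div_lt hx
        exact ⟨n, hn⟩
    have hT1 : Tendsto (fun n : ℕ => ∫ x in Ioi ((1:ℝ)/(n+1)), g x) atTop
        (𝓝 (∫ x in Ioi (0:ℝ), g x)) := by
      have := tendsto_setIntegral_of_monotone (fun n => measurableSet_Ioi) hmono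
        (by rw [hunion]; exact hint0)
      rwa [hunion] at this
    have hT2 : Tendsto (fun n : ℕ => ∫ x in Ioi ((1:ℝ)/(n+1)), g x) atTop
        (𝓝 (F (Q 0))) := by
      have hseq' : Tendsto (fun n : ℕ => (1:ℝ)/(n+1)) atTop (𝓝[>] 0) :=
        tendsto_nhdsWithin_of_tendsto_nhds_of_eventually_within _ hseq
          (Filter.Eventually.of_forall fun n => hseqpos n)
      have := hE0.comp hseq'
      apply this.congr
      intro n
      exact ((key _ (hseqpos n)).2).symm
    exact tendsto_nhds_unique hT2 hT1
  -- positivity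
  have hex : ∃ r : ℝ, 0 < r ∧ Q' r ≠ 0 := by
    by_contra hcon
    push_neg at hcon
    apply hnc
    refine ⟨Q 1, fun r hr => ?_⟩
    have hconst : ∀ t : ℝ, 0 < t → Q t = Q 1 := by
      intro t ht
      have hQ'zero : ∀ x ∈ uIcc t 1, Q' x = 0 := by
        intro x hx
        have hx0 : 0 < x := by
          rcases le_total t 1 with h | h
          · rw [uIcc_of_le h] at hx; exact lt_of_lt_of_le ht hx.1
          · rw [uIcc_of_ge h] at hx; exact lt_of_lt_of_le one_pos hx.1
        exact hcon x hx0
      have hderiv : ∀ x ∈ uIcc t 1, HasDerivAt Q (Q' x) x := by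
        intro x hx
        have hx0 : 0 < x := by
          rcases le_total t 1 with h | h
          · rw [uIcc_of_le h] at hx; exact lt_of_lt_of_le ht hx.1
          · rw [uIcc_of_ge h] at hx; exact lt_of_lt_of_le one_pos hx.1
        exact hQd x hx0
      have hii : IntervalIntegrable Q' MeasureTheory.volume t 1 := by
        apply ContinuousOn.intervalIntegrable
        intro x hx
        have hx0 : 0 < x := by
          rcases le_total t 1 with h | h
          · rw [uIcc_of_le h] at hx; exact lt_of_lt_of_le ht hx.1
          · rw [uIcc_of_ge h] at hx; exact lt_of_lt_of_le one_pos hx.1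
        exact (hQd' x hx0).continuousAt.continuousWithinAt
      have hftc := intervalIntegral.integral_eq_sub_of_hasDerivAt hderiv hii
      have hzero : (∫ x in t..1, Q' x) = 0 := by
        have heq : EqOn Q' (fun _ => (0 : EuclideanSpace ℝ (Fin m))) (uIcc t 1) :=
          fun x hx => hQ'zero x hx
        rw [intervalIntegral.integral_congr heq]
        simp
      rw [hzero] at hftc
      exact (sub_eq_zero.mp hftc.symm).symm
    rcases eq_or_lt_of_le hr with h0 | h0
    · -- r = 0
      have hQt : Tendsto Q (𝓝[>] (0:ℝ)) (𝓝 (Q 0)) := hQ0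
      have hconst' : Tendsto Q (𝓝[>] (0:ℝ)) (𝓝 (Q 1)) := by
        apply Tendsto.congr' _ tendsto_const_nhds
        filter_upwards [self_mem_nhdsWithin] with t ht
        exact (hconst t ht).symm
      rw [← h0]
      exact tendsto_nhds_unique hQt hconst'
    · exact hconst r h0
  obtain ⟨r₀, hr₀, hQ'r₀⟩ := hex
  have hgr₀ : 0 < g r₀ := by
    have h1 : 0 < ‖Q' r₀‖ := norm_pos_iff.mpr hQ'r₀
    have h2 : (0:ℝ) < 2 / r₀ := by positivity
    positivity
  have hpos : 0 < ∫ r in Ioi (0:ℝ), g r := by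
    have hgc : ContinuousAt g r₀ := hgcont.continuousAt (Ioi_mem_nhds hr₀)
    obtain ⟨ε, hε, hball⟩ := Metric.eventually_nhds_iff.mp
      (hgc.eventually (eventually_gt_nhds hgr₀))
    set δ : ℝ := min (ε/2) (r₀/2) with hδ_def
    have hδpos : 0 < δ := by
      apply lt_min <;> linarith
    set a : ℝ := r₀ - δ with ha_def
    set b : ℝ := r₀ + δ with hb_def
    have h0a : 0 < a := by
      have : δ ≤ r₀/2 := min_le_right _ _
      simp only [ha_def]
      linarith
    have hab : a < b := by simp only [ha_def, hb_def]; linarith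
    have hsub : Ioo a b ⊆ {x | 0 < g x} := by
      intro x hx
      apply hball
      rw [Real.dist_eq, abs_lt]
      have hδε : δ ≤ ε/2 := min_le_left _ _
      obtain ⟨hx1, hx2⟩ := hx
      constructor <;> simp only [ha_def] at hx1 <;> simp only [hb_def] at hx2 <;> linarith
    have hIoisub : uIcc a b ⊆ Ioi 0 := by
      rw [uIcc_of_le hab.le]
      intro x hx
      exact lt_of_lt_of_le h0a hx.1
    have hii : IntervalIntegrable g MeasureTheory.volume a b :=
      (hgcont.mono hIoisub).intervalIntegrable
    have h1 : 0 < ∫ x in a..b, g x :=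
      intervalIntegral.intervalIntegral_pos_of_pos_on hii (fun x hx => hsub hx) hab
    have h2 : (∫ x in a..b, g x) = ∫ x in Ioc a b, g x :=
      intervalIntegral.integral_of_le hab.le
    have h3 : (∫ x in Ioc a b, g x) ≤ ∫ x in Ioi (0:ℝ), g x := by
      apply setIntegral_mono_set hint0
      · exact (ae_restrict_iff' measurableSet_Ioi).2
          (ae_of_all _ fun x hx => hgnonneg x hx)
      · refine HasSubset.Subset.eventuallyLE fun x hx => ?_
        exact lt_of_lt_of_le h0a hx.1.le
    linarith
  refine ⟨hint0, hval, hval ▸ hpos⟩
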